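/- Under the stated assumptions, suppose x : [0, τ] → ℝ³ is continuous with ‖x(0)‖ = 1, is differentiable on [0, τ) where it satisfies ẋ(t) = x(t) × (x(t) × ∇U(x(t))), and satisfies x(t)·f_i < ε_i for all t ∈ [0, τ) and all i ∈ {0, 1, …, m}. Then x(τ)·f_i < ε_i for all i; i.e., a trajectory of the baseline guidance flow starting in the eroded free space can never reach the boundary of any augmented forbidden zone, so the eroded free space is forward invariant. -/

import Mathlib

open scoped RealInnerProductSpace

/-- The cross product on `ℝ³` endowed with the Euclidean norm. -/
noncomputable def cross3 (a b : EuclideanSpace ℝ (Fin 3)) : EuclideanSpace ℝ (Fin 3) :=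
  (WithLp.equiv 2 (Fin 3 → ℝ)).symm
    (crossProduct ((WithLp.equiv 2 (Fin 3 → ℝ)) a) ((WithLp.equiv 2 (Fin 3 → ℝ)) b))

/-- The gradient `∇φ` of the repulsive function, parameters `a = ε*`, `b = ε`. -/
noncomputable def gradphi (a b : ℝ) (z : ℝ) : ℝ :=
  if a ≤ z then 2 * (z - a) * Real.log ((b - a) / (b - z)) + (z - a) ^ 2 / (b - z) else 0

/-- The gradient of the artificial potential,
`∇U(x) = −k_a x* + k_r Σ_{i=0}^m ∇φ_i(x·f_i) f_i`. -/
noncomputable def gradU {m : ℕ} (ka kr : ℝ)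
    (xstar : EuclideanSpace ℝ (Fin 3)) (f : Fin (m + 1) → EuclideanSpace ℝ (Fin 3))
    (es eb : Fin (m + 1) → ℝ) (x : EuclideanSpace ℝ (Fin 3)) : EuclideanSpace ℝ (Fin 3) :=
  (-ka) • xstar + kr • ∑ i, gradphi (es i) (eb i) ⟪x, f i⟫ • f i

/- ### Auxiliary material -/

lemma inner_eq_dot (u v : EuclideanSpace ℝ (Fin 3)) :
    ⟪u, v⟫ = dotProduct ((WithLp.equiv 2 (Fin 3 → ℝ)) u)
      ((WithLp.equiv 2 (Fin 3 → ℝ)) v) := by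
  simp [PiLp.inner_apply, RCLike.inner_apply, dotProduct, mul_comm]

lemma inner_self_cross3 (a b : EuclideanSpace ℝ (Fin 3)) : ⟪a, cross3 a b⟫ = 0 := by
  rw [inner_eq_dot]; simp [cross3]

lemma inner_triple (x v : EuclideanSpace ℝ (Fin 3)) :
    ⟪v, cross3 x (cross3 x v)⟫ = ⟪x, v⟫ ^ 2 - ‖x‖ ^ 2 * ‖v‖ ^ 2 := by
  rw [inner_eq_dot, ← @real_inner_self_eq_norm_sq, ← @real_inner_self_eq_norm_sq,
    inner_eq_dot x x, inner_eq_dot v v, inner_eq_dot x v]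
  simp only [cross3, Equiv.apply_symm_apply]
  rw [triple_product_permutation, triple_product_permutation, cross_dot_cross,
    dotProduct_comm ((WithLp.equiv 2 (Fin 3 → ℝ)) v) ((WithLp.equiv 2 (Fin 3 → ℝ)) x)]
  ring

/-- The repulsive potential itself. -/
noncomputable def phifun (a b z : ℝ) : ℝ :=
  if a ≤ z then (z - a) ^ 2 * Real.log ((b - a) / (b - z)) else 0

lemma phifun_nonneg {a b z : ℝ} (hab : a < b) (hz : z < b) : 0 ≤ phifun a b z := by
  unfold phifun; split_ifs with h
  · refine mul_nonneg (sq_nonneg _) (Real.log_nonneg ?_)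
    rw [le_div_iff₀ (by linarith)]; linarith
  · exact le_rfl

lemma hasDerivAt_phifun {a b z : ℝ} (hab : a < b) (hz : z < b) :
    HasDerivAt (phifun a b) (gradphi a b z) z := by
  rcases lt_trichotomy z a with h | heq | h
  · have hev : (fun _ : ℝ => (0:ℝ)) =ᶠ[nhds z] phifun a b := by
      filter_upwards [Iio_mem_nhds h] with w hw
      simp [phifun, not_le.mpr (Set.mem_Iio.mp hw)]
    rw [gradphi, if_neg (not_le.mpr h)]
    exact (hasDerivAt_const z (0:ℝ)).congr_of_eventuallyEq hev.symm
  · -- z = a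
    subst heq
    have hgp : gradphi z b z = 0 := by
      simp [gradphi]
    rw [hgp, hasDerivAt_iff_tendsto_slope]
    have hcont : ContinuousAt (fun w => |w - z| * |Real.log ((b - z) / (b - w))|) z := by
      have h1 : ContinuousAt (fun w : ℝ => (b - z) / (b - w)) z := by
        exact (continuousAt_const.div (continuousAt_const.sub continuousAt_id) (by simp; linarith))
      have h3 : ContinuousAt (fun w : ℝ => Real.log ((b - z) / (b - w))) z := by
        apply h1.log
        rw [div_self (by linarith : (b:ℝ) - z ≠ 0)]
        exact one_ne_zero
      exact (continuousAt_id.sub continuousAt_const).abs.mul h3.abs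
    have hg0 : Filter.Tendsto (fun w => |w - z| * |Real.log ((b - z) / (b - w))|)
        (nhdsWithin z {z}ᶜ) (nhds 0) := by
      have := hcont.tendsto
      simp only [sub_self, abs_zero, zero_mul] at this
      exact this.mono_left nhdsWithin_le_nhds
    apply squeeze_zero_norm' _ hg0
    filter_upwards [self_mem_nhdsWithin,
      eventually_nhdsWithin_of_eventually_nhds (Iio_mem_nhds hz)] with w hw hwb
    have hwa : w ≠ z := hw
    rcases le_or_gt z w with hle | hlt
    · have : slope (phifun z b) z w = (w - z) * Real.log ((b - z) / (b - w)) := by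
        rw [slope_def_field, phifun, if_pos hle, phifun, if_pos le_rfl]
        field_simp [sub_ne_zero.mpr hwa]
        ring
      rw [this, norm_mul]
      simp [abs_abs, Real.norm_eq_abs]
    · have : slope (phifun z b) z w = 0 := by
        rw [slope_def_field, phifun, if_neg (not_le.mpr hlt), phifun, if_pos le_rfl]
        simp
      rw [this, norm_zero]
      positivity
  · -- a < z < b
    have hbz : (0:ℝ) < b - z := by linarith
    have hlog : HasDerivAt (fun w : ℝ => Real.log (b - w)) (-(b - z)⁻¹) z := by
      have h1 : HasDerivAt (fun w : ℝ => b - w) (-1) z := by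
        simpa using (hasDerivAt_const z b).fun_sub (hasDerivAt_id z)
      have := (Real.hasDerivAt_log (ne_of_gt hbz)).comp z h1
      simpa [Function.comp_def] using this
    have hsq : HasDerivAt (fun w : ℝ => (w - a) ^ 2) (2 * (z - a)) z := by
      have h1 : HasDerivAt (fun w : ℝ => w - a) 1 z := by
        simpa using (hasDerivAt_id z).fun_sub (hasDerivAt_const z a)
      have := h1.fun_pow 2
      simpa [mul_comm] using this
    have hmain : HasDerivAt (fun w : ℝ => (w - a) ^ 2 * (Real.log (b - a) - Real.log (b - w)))
        (2 * (z - a) * (Real.log (b - a) - Real.log (b - z)) + (z - a) ^ 2 * (b - z)⁻¹) z := by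
      have := hsq.fun_mul ((hasDerivAt_const z (Real.log (b - a))).fun_sub hlog)
      refine this.congr_deriv ?_
      ring
    have hev : (fun w : ℝ => (w - a) ^ 2 * (Real.log (b - a) - Real.log (b - w)))
        =ᶠ[nhds z] phifun a b := by
      filter_upwards [Ioo_mem_nhds h hz] with w hw
      rw [phifun, if_pos (le_of_lt hw.1),
        Real.log_div (by linarith [hw.2] : b - a ≠ 0) (by linarith [hw.2] : b - w ≠ 0)]
    have := hmain.congr_of_eventuallyEq hev.symm
    refine this.congr_deriv (Eq.symm ?_)
    rw [gradphi, if_pos (le_of_lt h), Real.log_div (by linarith : b - a ≠ 0) (ne_of_gt hbz)]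
    field_simp

lemma phifun_large {a b : ℝ} (hab : a < b) (M : ℝ) :
    ∃ z₀, z₀ < b ∧ ∀ z, z₀ ≤ z → z < b → M < phifun a b z := by
  set d := (b - a) / 2 with hd
  have hd0 : 0 < d := by rw [hd]; linarith
  set K := (max M 0 + 1) / d ^ 2 with hK
  have hK0 : 0 < K := by
    apply div_pos _ (by positivity)
    have := le_max_right M 0
    linarith
  refine ⟨max ((a + b) / 2) (b - (b - a) * Real.exp (-K)), ?_, ?_⟩
  · apply max_lt (by linarith)
    have h1 := Real.exp_pos (-K)
    nlinarith
  · intro z hz0 hzb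
    have hza : (a + b) / 2 ≤ z := le_trans (le_max_left _ _) hz0
    have h1 : d ≤ z - a := by rw [hd]; linarith
    have haz : a ≤ z := by linarith
    have h2 : b - z ≤ (b - a) * Real.exp (-K) := by
      have := le_trans (le_max_right _ _) hz0; linarith
    have hbz : 0 < b - z := by linarith
    have hlog : K ≤ Real.log ((b - a) / (b - z)) := by
      rw [Real.le_log_iff_exp_le (div_pos (by linarith) hbz), le_div_iff₀ hbz]
      calc Real.exp K * (b - z) ≤ Real.exp K * ((b - a) * Real.exp (-K)) :=
            mul_le_mul_of_nonneg_left h2 (Real.exp_pos K).le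
        _ = (b - a) * (Real.exp K * Real.exp (-K)) := by ring
        _ = b - a := by rw [← Real.exp_add]; simp
    rw [phifun, if_pos haz]
    have hmul : d ^ 2 * K ≤ (z - a) ^ 2 * Real.log ((b - a) / (b - z)) :=
      mul_le_mul (pow_le_pow_left₀ hd0.le h1 2) hlog hK0.le (sq_nonneg _)
    have hdk : d ^ 2 * K = max M 0 + 1 := by
      rw [hK]; field_simp
    have hM : M ≤ max M 0 := le_max_left M 0
    linarith

/-- forward invariance of the eroded free space under the
baseline guidance flow `ẋ = x × (x × ∇U(x))`: a trajectory that stays in the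
eroded free space on `[0, τ)` cannot reach the boundary of any augmented
forbidden zone at time `τ`. -/
theorem eroded_free_space_forward_invariant
    (m : ℕ) (hm : 1 ≤ m) (ka kr : ℝ) (hka : 0 < ka) (hkr : 0 < kr)
    (xstar : EuclideanSpace ℝ (Fin 3)) (f : Fin (m + 1) → EuclideanSpace ℝ (Fin 3))
    (hxstar : ‖xstar‖ = 1) (hf : ∀ i, ‖f i‖ = 1) (hf0 : f 0 = -xstar)
    (es eb : Fin (m + 1) → ℝ) (heseb : ∀ i, es i < eb i) (heb : ∀ i, eb i < 1)
    (hgoal : ∀ i, ⟪xstar, f i⟫ ≤ es i)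
    (τ : ℝ) (hτ : 0 < τ) (x : ℝ → EuclideanSpace ℝ (Fin 3))
    (hxcont : ContinuousOn x (Set.Icc 0 τ))
    (hx0 : ‖x 0‖ = 1)
    (hxderiv : ∀ t ∈ Set.Ico (0 : ℝ) τ,
      HasDerivAt x (cross3 (x t) (cross3 (x t) (gradU ka kr xstar f es eb (x t)))) t)
    (hfree : ∀ t ∈ Set.Ico (0 : ℝ) τ, ∀ i, ⟪x t, f i⟫ < eb i) :
    ∀ i, ⟪x τ, f i⟫ < eb i := by
  have hτ0 : (0:ℝ) ≤ τ := hτ.le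
  set X : ℝ → EuclideanSpace ℝ (Fin 3) :=
    fun t => cross3 (x t) (cross3 (x t) (gradU ka kr xstar f es eb (x t))) with hX
  -- norm preservation
  have hnorm1 : ∀ t ∈ Set.Icc (0:ℝ) τ, ⟪x t, x t⟫ = 1 := by
    have hcont : ContinuousOn (fun t => ⟪x t, x t⟫) (Set.Icc 0 τ) := hxcont.inner hxcont
    have hder : ∀ t ∈ Set.Ico (0:ℝ) τ,
        HasDerivWithinAt (fun t => ⟪x t, x t⟫) 0 (Set.Ici t) t := by
      intro t ht
      have h2 := HasDerivAt.inner ℝ (hxderiv t ht) (hxderiv t ht)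
      have hz : ⟪x t, X t⟫ = 0 := inner_self_cross3 _ _
      have hz' : ⟪X t, x t⟫ = 0 := by rw [real_inner_comm]; exact hz
      rw [hX] at hz hz'
      simp only [hz, hz', add_zero] at h2
      exact h2.hasDerivWithinAt
    intro t ht
    have := constant_of_has_deriv_right_zero hcont hder t ht
    rw [this, real_inner_self_eq_norm_sq, hx0]
    norm_num
  have hnormt : ∀ t ∈ Set.Icc (0:ℝ) τ, ‖x t‖ = 1 := by
    intro t ht
    have h := hnorm1 t ht
    rw [real_inner_self_eq_norm_sq] at h
    have h1 : (‖x t‖ - 1) * (‖x t‖ + 1) = 0 := by nlinarith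
    rcases mul_eq_zero.mp h1 with h2 | h2
    · linarith
    · have := norm_nonneg (x t); linarith
  -- the Lyapunov function
  set u : ℝ → ℝ :=
    fun t => ka * (1 - ⟪x t, xstar⟫) + kr * ∑ i, phifun (es i) (eb i) ⟪x t, f i⟫ with hu
  have hud : ∀ t ∈ Set.Ico (0:ℝ) τ,
      HasDerivAt u (⟪gradU ka kr xstar f es eb (x t), X t⟫) t ∧
      ⟪gradU ka kr xstar f es eb (x t), X t⟫ ≤ 0 := by
    intro t ht
    have hinner : ∀ c : EuclideanSpace ℝ (Fin 3),
        HasDerivAt (fun s => ⟪x s, c⟫) ⟪X t, c⟫ t := by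
      intro c
      have := HasDerivAt.inner ℝ (hxderiv t ht) (hasDerivAt_const t c)
      simpa using this
    have hphi : ∀ i : Fin (m + 1),
        HasDerivAt (fun s => phifun (es i) (eb i) ⟪x s, f i⟫)
          (gradphi (es i) (eb i) ⟪x t, f i⟫ * ⟪X t, f i⟫) t := by
      intro i
      have := (hasDerivAt_phifun (heseb i) (hfree t ht i)).comp t (hinner (f i))
      simpa [Function.comp_def] using this
    have hsum := HasDerivAt.fun_sum (fun i (_ : i ∈ Finset.univ) => hphi i)
    have h1 : HasDerivAt (fun s => ka * (1 - ⟪x s, xstar⟫)) (ka * (0 - ⟪X t, xstar⟫)) t :=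
      (((hasDerivAt_const t (1:ℝ)).sub (hinner xstar))).const_mul ka
    have h2 : HasDerivAt u
        (ka * (0 - ⟪X t, xstar⟫) +
          kr * ∑ i, gradphi (es i) (eb i) ⟪x t, f i⟫ * ⟪X t, f i⟫) t :=
      h1.add (hsum.const_mul kr)
    have hg : ∀ w : EuclideanSpace ℝ (Fin 3),
        ⟪gradU ka kr xstar f es eb (x t), w⟫ =
          ka * (0 - ⟪w, xstar⟫) + kr * ∑ i, gradphi (es i) (eb i) ⟪x t, f i⟫ * ⟪w, f i⟫ := by
      intro w
      have hsum2 : ∑ j, gradphi (es j) (eb j) ⟪x t, f j⟫ * ⟪f j, w⟫ =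
          ∑ j, gradphi (es j) (eb j) ⟪x t, f j⟫ * ⟪w, f j⟫ :=
        Finset.sum_congr rfl (fun j _ => by rw [real_inner_comm w (f j)])
      simp only [gradU, inner_add_left, real_inner_smul_left, sum_inner]
      rw [hsum2, real_inner_comm xstar w]
      ring
    constructor
    · rw [hg]; exact h2
    · rw [inner_triple]
      have hxn : ‖x t‖ = 1 := hnormt t (Set.Ico_subset_Icc_self ht)
      have hcs := abs_real_inner_le_norm (x t) (gradU ka kr xstar f es eb (x t))
      rw [hxn] at hcs ⊢
      nlinarith [abs_nonneg ⟪x t, gradU ka kr xstar f es eb (x t)⟫,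
        sq_abs ⟪x t, gradU ka kr xstar f es eb (x t)⟫,
        norm_nonneg (gradU ka kr xstar f es eb (x t))]
  -- u is nonincreasing
  have hkey : ∀ s ∈ Set.Ico (0:ℝ) τ, u s ≤ u 0 := by
    intro s hs
    have hIcc : Set.Icc (0:ℝ) s ⊆ Set.Ico 0 τ := fun t ht => ⟨ht.1, lt_of_le_of_lt ht.2 hs.2⟩
    have hA : AntitoneOn u (Set.Icc 0 s) := by
      apply antitoneOn_of_deriv_nonpos (convex_Icc 0 s)
      · intro t ht; exact ((hud t (hIcc ht)).1).continuousAt.continuousWithinAt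
      · intro t ht; rw [interior_Icc] at ht
        exact ((hud t (hIcc (Set.Ioo_subset_Icc_self ht))).1).differentiableAt.differentiableWithinAt
      · intro t ht; rw [interior_Icc] at ht
        have h := hud t (hIcc (Set.Ioo_subset_Icc_self ht))
        rw [h.1.deriv]; exact h.2
    exact hA ⟨le_rfl, hs.1⟩ ⟨hs.1, le_rfl⟩ hs.1
  -- conclusion
  intro i
  obtain ⟨z₀, hz₀b, hz₀⟩ := phifun_large (heseb i) (u 0 / kr)
  have hbound : ∀ t ∈ Set.Ico (0:ℝ) τ, ⟪x t, f i⟫ ≤ z₀ := by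
    intro t ht
    by_contra hcon
    push_neg at hcon
    have h1 := hz₀ _ hcon.le (hfree t ht i)
    have hterm1 : 0 ≤ ka * (1 - ⟪x t, xstar⟫) := by
      have hcs := real_inner_le_norm (x t) xstar
      rw [hnormt t (Set.Ico_subset_Icc_self ht), hxstar] at hcs
      nlinarith
    have hterm2 : phifun (es i) (eb i) ⟪x t, f i⟫ ≤ ∑ j, phifun (es j) (eb j) ⟪x t, f j⟫ :=
      Finset.single_le_sum (fun j _ => phifun_nonneg (heseb j) (hfree t ht j))
        (Finset.mem_univ i)
    have h2 : kr * phifun (es i) (eb i) ⟪x t, f i⟫ ≤ u t := by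
      have hut : u t = ka * (1 - ⟪x t, xstar⟫) +
          kr * ∑ j, phifun (es j) (eb j) ⟪x t, f j⟫ := rfl
      rw [hut]
      nlinarith
    have h3 := hkey t ht
    rw [div_lt_iff₀ hkr] at h1
    linarith
  have hτmem : τ ∈ Set.Icc (0:ℝ) τ := ⟨hτ0, le_rfl⟩
  have hne : (nhdsWithin τ (Set.Ico (0:ℝ) τ)).NeBot := by
    apply mem_closure_iff_nhdsWithin_neBot.mp
    rw [closure_Ico (ne_of_lt hτ)]
    exact ⟨hτ0, le_rfl⟩
  have htend : Filter.Tendsto (fun t => ⟪x t, f i⟫) (nhdsWithin τ (Set.Ico (0:ℝ) τ))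
      (nhds ⟪x τ, f i⟫) := by
    exact ((hxcont τ hτmem).mono Set.Ico_subset_Icc_self).inner continuousWithinAt_const
  have hfin : ⟪x τ, f i⟫ ≤ z₀ :=
    le_of_tendsto htend (Filter.eventually_of_mem self_mem_nhdsWithin hbound)
  linarith
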